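/- Let f : (0,∞) → (0,∞) be continuously differentiable and strictly increasing with f' increasing (i.e. f convex). Then for all distinct x, y ∈ (0,∞) with y < x, log I(f(x), f(y)) ≥ (1/(x−y)) · ∫_y^x log f(u) du. -/

import Mathlib

open Set MeasureTheory intervalIntegral

/-- The identric mean `I(a,b) = (1/e) * (a^a / b^b)^(1/(a-b))` of distinct
positive reals `a`, `b`. -/
noncomputable def identric (a b : ℝ) : ℝ :=
  (1 / Real.exp 1) * (a ^ a / b ^ b) ^ (1 / (a - b))

lemma log_identric (a b : ℝ) (hb : 0 < b) (hba : b < a) :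
    Real.log (identric a b) = (a * Real.log a - b * Real.log b) / (a - b) - 1 := by
  have ha : 0 < a := hb.trans hba
  have hab : a - b ≠ 0 := by linarith
  have h1 : (0:ℝ) < a ^ a / b ^ b :=
    div_pos (Real.rpow_pos_of_pos ha a) (Real.rpow_pos_of_pos hb b)
  rw [identric, Real.log_mul (by positivity) (by positivity), Real.log_rpow h1,
    Real.log_div (Real.rpow_pos_of_pos ha a).ne' (Real.rpow_pos_of_pos hb b).ne',
    Real.log_rpow ha, Real.log_rpow hb, one_div (Real.exp 1), Real.log_inv, Real.log_exp]
  field_simp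
  ring

/-- If `f : (0,∞) → (0,∞)` is continuously differentiable, strictly increasing
and has increasing derivative (i.e. is convex), then for all `0 < y < x`,
`log I(f(x), f(y)) ≥ (1/(x-y)) ∫_y^x log f(u) du`. -/
theorem log_identric_ge_mean_log (f : ℝ → ℝ)
    (hpos : ∀ x ∈ Ioi (0 : ℝ), 0 < f x)
    (hder : ContDiffOn ℝ 1 f (Ioi 0))
    (hmono : StrictMonoOn f (Ioi 0))
    (hderiv_mono : MonotoneOn (deriv f) (Ioi 0)) :
    ∀ x y : ℝ, 0 < y → y < x →
      Real.log (identric (f x) (f y)) ≥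
        (1 / (x - y)) * ∫ u in y..x, Real.log (f u) := by
  intro x y hy hyx
  have hx : 0 < x := hy.trans hyx
  have hIcc : Icc y x ⊆ Ioi (0:ℝ) := fun u hu => lt_of_lt_of_le hy hu.1
  set a := f x with ha_def
  set b := f y with hb_def
  have hb : 0 < b := hpos y hy
  have hba : b < a := hmono (mem_Ioi.2 hy) (mem_Ioi.2 hx) hyx
  have ha : 0 < a := hb.trans hba
  have hxy : x - y ≠ 0 := by linarith
  have hab : a - b ≠ 0 := by linarith
  set s : ℝ := (a - b) / (x - y) with hs_def
  have hs : 0 < s := div_pos (by linarith) (by linarith)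
  set L : ℝ → ℝ := fun u => b + s * (u - y) with hL_def
  -- convexity bound : f u ≤ L u on Icc y x
  have hconv : ConvexOn ℝ (Icc y x) f := by
    apply MonotoneOn.convexOn_of_deriv (convex_Icc y x)
    · exact (hder.continuousOn).mono hIcc
    · have : Ioo y x ⊆ Ioi (0:ℝ) := fun u hu => lt_trans hy hu.1
      rw [interior_Icc]
      exact (hder.differentiableOn one_ne_zero).mono this
    · rw [interior_Icc]
      exact hderiv_mono.mono (fun u hu => lt_trans hy hu.1)
  have hfL : ∀ u ∈ Icc y x, f u ≤ L u := by
    intro u hu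
    have hc1 : (0:ℝ) ≤ (x - u) / (x - y) := by
      apply div_nonneg <;> [linarith [hu.2]; linarith]
    have hc2 : (0:ℝ) ≤ (u - y) / (x - y) := by
      apply div_nonneg <;> [linarith [hu.1]; linarith]
    have hc3 : (x - u) / (x - y) + (u - y) / (x - y) = 1 := by field_simp; ring
    have := hconv.2 (left_mem_Icc.2 hyx.le) (right_mem_Icc.2 hyx.le) hc1 hc2 hc3
    have heq : ((x - u) / (x - y)) • y + ((u - y) / (x - y)) • x = u := by
      simp only [smul_eq_mul]
      rw [div_mul_eq_mul_div, div_mul_eq_mul_div, ← add_div, div_eq_iff hxy]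
      ring
    rw [heq] at this
    refine this.trans_eq ?_
    simp only [smul_eq_mul, hL_def, hs_def]
    field_simp
    ring
  -- continuity of log ∘ f and log ∘ L on Icc
  have hfc : ContinuousOn f (Icc y x) := (hder.continuousOn).mono hIcc
  have hlogf : ContinuousOn (fun u => Real.log (f u)) (Icc y x) :=
    hfc.log (fun u hu => (hpos u (hIcc hu)).ne')
  have hLpos : ∀ u ∈ Icc y x, 0 < L u := by
    intro u hu
    have : 0 ≤ s * (u - y) := mul_nonneg hs.le (by linarith [hu.1])
    simp only [hL_def]; linarith
  have hLc : ContinuousOn L (Icc y x) := by fun_prop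
  have hlogL : ContinuousOn (fun u => Real.log (L u)) (Icc y x) :=
    hLc.log (fun u hu => (hLpos u hu).ne')
  -- integral comparison
  have hint : (∫ u in y..x, Real.log (f u)) ≤ ∫ u in y..x, Real.log (L u) := by
    apply intervalIntegral.integral_mono_on hyx.le
    · exact (hlogf.mono (by rw [uIcc_of_le hyx.le])).intervalIntegrable
    · exact (hlogL.mono (by rw [uIcc_of_le hyx.le])).intervalIntegrable
    · exact fun u hu => Real.log_le_log (hpos u (hIcc hu)) (hfL u hu)
  -- compute ∫ log L
  have hLval : (∫ u in y..x, Real.log (L u))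
      = (a * Real.log a - a - (b * Real.log b - b)) / s := by
    have key : ∀ u ∈ uIcc y x,
        HasDerivAt (fun u => (L u * Real.log (L u) - L u) / s) (Real.log (L u)) u := by
      intro u hu
      rw [uIcc_of_le hyx.le] at hu
      have hLu : 0 < L u := hLpos u hu
      have hdL : HasDerivAt L s u := by
        simpa [hL_def] using (((hasDerivAt_id u).sub_const y).const_mul s).const_add b
      have h1 : HasDerivAt (fun t : ℝ => t * Real.log t - t) (Real.log (L u)) (L u) := by
        have := ((hasDerivAt_id (L u)).mul (Real.hasDerivAt_log hLu.ne')).sub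
          (hasDerivAt_id (L u))
        refine this.congr_deriv ?_
        simp only [id_eq, one_mul, mul_inv_cancel₀ hLu.ne']; ring
      have := (h1.comp u hdL).div_const s
      refine this.congr_deriv ?_
      simp [hs.ne']
    rw [intervalIntegral.integral_eq_sub_of_hasDerivAt key
      ((hlogL.mono (by rw [uIcc_of_le hyx.le])).intervalIntegrable)]
    have hLx : L x = a := by simp only [hL_def, hs_def]; field_simp; ring
    have hLy : L y = b := by simp [hL_def]
    rw [hLx, hLy]
    ring
  -- finish
  rw [ge_iff_le, log_identric a b hb hba]
  have h2 : (1 / (x - y)) * ∫ u in y..x, Real.log (f u)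
      ≤ (1 / (x - y)) * ((a * Real.log a - a - (b * Real.log b - b)) / s) := by
    rw [← hLval]
    apply mul_le_mul_of_nonneg_left hint
    have h3 : 0 < x - y := by linarith
    positivity
  refine h2.trans_eq ?_
  rw [hs_def]
  field_simp
  ring
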